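/- Let β ≥ 1. There exist ε₀ > 0 and g : (0, ε₀) → (0, ∞) with g(t) → 0 as t → 0 such that: for Banach spaces Y₁, Y₂, operators L : Y₁ → Y₂ and R : Y₂ → Y₁ with RL − I compact, ‖RL − I‖ ≤ ε < ε₀ and ‖L‖, ‖R‖ ≤ β, there exist a Banach space Y₃ and an invertible operator S : Y₂ → Y₁ ⊕ Y₃ with ‖S‖‖S⁻¹‖ ≤ 7β⁶ such that: for all T₁ ∈ B(Y₁), T₂ ∈ B(Y₂) with LT₁ − T₂L and T₁R − RT₂ compact, there are a compact operator K on Y₂ and an operator T₃ on Y₃ with S(T₂ + K)S⁻¹ = T₁ ⊕ T₃, and ‖K‖ ≤ g(ε)(‖T₂‖ + 1) whenever ‖LT₁ − T₂L‖ ≤ ε and ‖T₁R − RT₂‖ ≤ ε. -/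

import Mathlib

private lemma stmt5_arith1 (β : ℝ) (hβ : 1 ≤ β) : 2 * β ≤ 3 * β ^ 2 := by nlinarith
private lemma stmt5_arith2 (β : ℝ) (hβ : 1 ≤ β) : 1 + 2 * β ^ 2 ≤ 3 * β ^ 2 := by nlinarith
private lemma stmt5_arith3 (β : ℝ) (hβ : 1 ≤ β) : (3 * β ^ 2) * (2 * β) ≤ 7 * β ^ 6 := by
  nlinarith [sq_nonneg β, sq_nonneg (β - 1), sq_nonneg (β ^ 2 - 1), sq_nonneg (β ^ 3 - β), sq_nonneg (β ^ 3 - 1)]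
private lemma stmt5_arithN (x ε : ℝ) (h : x ≤ 1 + x * ε) (h1 : 0 ≤ x) (h2 : ε < 1 / 2)
    (h0 : 0 < ε) : x ≤ 2 := by nlinarith
private lemma stmt5_arithT1 (β ε t : ℝ) (hβ : 1 ≤ β) (hε : 0 ≤ ε) (hε1 : ε ≤ 1) (ht : 0 ≤ t) :
    2 * (β * (ε + t * β)) ≤ 2 * β ^ 2 * (t + 1) := by nlinarith
private lemma stmt5_arithK (β ε t : ℝ) (hβ : 1 ≤ β) (hε : 0 ≤ ε) (hε1 : ε ≤ 1) (ht : 0 ≤ t) :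
    β * (ε + (2 * β ^ 2 * (t + 1)) * (2 * ε * β) + 2 * ε * (β * t))
      + (ε * β + β * ε + β * (2 * ε * (β * t)) + t * β * (2 * ε * β)) * (2 * β ^ 2)
      ≤ 100 * β ^ 4 * ε * (t + 1) := by
  have h1 : β ≤ β ^ 4 := by nlinarith [sq_nonneg β, sq_nonneg (β - 1), sq_nonneg (β ^ 2 - 1)]
  have h2 : β ^ 2 ≤ β ^ 4 := by nlinarith [sq_nonneg (β ^ 2 - β), sq_nonneg β]
  have h3 : β ^ 3 ≤ β ^ 4 := by nlinarith [pow_nonneg (le_trans zero_le_one hβ) 3]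
  have h4 : 0 ≤ ε * t := mul_nonneg hε ht
  nlinarith [mul_nonneg h4 (by positivity : (0:ℝ) ≤ β ^ 4), mul_nonneg hε (by positivity : (0:ℝ) ≤ β ^ 4), mul_le_mul_of_nonneg_left h1 h4, mul_le_mul_of_nonneg_left h2 h4, mul_le_mul_of_nonneg_left h3 h4, mul_le_mul_of_nonneg_left h1 hε, mul_le_mul_of_nonneg_left h2 hε, mul_le_mul_of_nonneg_left h3 hε]



set_option maxHeartbeats 1600000


/-- approximate complementation lemma. For `β ≥ 1` there exist `ε₀ > 0` and
`g : (0,ε₀) → (0,∞)` with `g(t) → 0` as `t → 0` such that: for Banach spaces `Y₁, Y₂` and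
operators `L : Y₁ → Y₂`, `R : Y₂ → Y₁` with `RL − I` compact, `‖RL − I‖ ≤ ε < ε₀`,
`‖L‖, ‖R‖ ≤ β`, there are a (sub)space `Y₃` of `Y₂` and an invertible `S : Y₂ → Y₁ ⊕ Y₃` with
`‖S‖‖S⁻¹‖ ≤ 7β⁶` such that: whenever `LT₁ − T₂L` and `T₁R − RT₂` are compact, there are a
compact `K` and an operator `T₃` on `Y₃` with `S(T₂ + K)S⁻¹ = T₁ ⊕ T₃`, and
`‖K‖ ≤ g(ε)(‖T₂‖ + 1)` whenever `‖LT₁ − T₂L‖ ≤ ε` and `‖T₁R − RT₂‖ ≤ ε`. -/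
theorem stmt5 (β : ℝ) (hβ : 1 ≤ β) :
    ∃ ε₀ : ℝ, 0 < ε₀ ∧ ∃ g : ℝ → ℝ,
      (∀ t ∈ Set.Ioo (0 : ℝ) ε₀, 0 < g t) ∧
      Filter.Tendsto g (nhdsWithin 0 (Set.Ioo (0 : ℝ) ε₀)) (nhds 0) ∧
      ∀ (Y₁ Y₂ : Type) [NormedAddCommGroup Y₁] [NormedSpace ℂ Y₁] [CompleteSpace Y₁]
        [NormedAddCommGroup Y₂] [NormedSpace ℂ Y₂] [CompleteSpace Y₂]
        (ε : ℝ) (L : Y₁ →L[ℂ] Y₂) (R : Y₂ →L[ℂ] Y₁),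
        0 < ε → ε < ε₀ →
        IsCompactOperator (R ∘L L - ContinuousLinearMap.id ℂ Y₁) → ‖R ∘L L - ContinuousLinearMap.id ℂ Y₁‖ ≤ ε → ‖L‖ ≤ β → ‖R‖ ≤ β →
        ∃ (Y₃ : Submodule ℂ Y₂) (S : Y₂ ≃L[ℂ] Y₁ × Y₃),
          ‖(S : Y₂ →L[ℂ] Y₁ × Y₃)‖ * ‖(S.symm : Y₁ × Y₃ →L[ℂ] Y₂)‖ ≤ 7 * β ^ 6 ∧
          ∀ (T₁ : Y₁ →L[ℂ] Y₁) (T₂ : Y₂ →L[ℂ] Y₂),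
            IsCompactOperator (L ∘L T₁ - T₂ ∘L L) →
            IsCompactOperator (T₁ ∘L R - R ∘L T₂) →
            ∃ (K : Y₂ →L[ℂ] Y₂) (T₃ : Y₃ →L[ℂ] Y₃),
              IsCompactOperator K ∧
              (S : Y₂ →L[ℂ] Y₁ × Y₃) ∘L (T₂ + K) ∘L (S.symm : Y₁ × Y₃ →L[ℂ] Y₂) =
                T₁.prodMap T₃ ∧
              (‖L ∘L T₁ - T₂ ∘L L‖ ≤ ε → ‖T₁ ∘L R - R ∘L T₂‖ ≤ ε →
                ‖K‖ ≤ g ε * (‖T₂‖ + 1)) := by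
  have hβ0 : (0:ℝ) < β := lt_of_lt_of_le one_pos hβ
  refine ⟨1/2, by norm_num, fun t => 100 * β ^ 4 * t, ?_, ?_, ?_⟩
  · rintro t ⟨ht0, -⟩; positivity
  · have : Filter.Tendsto (fun t : ℝ => 100 * β ^ 4 * t) (nhds 0) (nhds 0) := by
      simpa using (show Continuous (fun t : ℝ => 100 * β ^ 4 * t) from continuous_const.mul continuous_id).tendsto (0:ℝ)
    exact this.mono_left nhdsWithin_le_nhds
  intro Y₁ Y₂ _ _ _ _ _ _ ε L R hε hε2 hCc hC hL hR
  set C : Y₁ →L[ℂ] Y₁ := R ∘L L - ContinuousLinearMap.id ℂ Y₁ with hCdef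
  have hεhalf : ε < 1/2 := hε2
  have hClt : ‖-C‖ < 1 := by rw [norm_neg]; linarith
  set u : (Y₁ →L[ℂ] Y₁)ˣ := Units.oneSub (-C) hClt with hu
  have huval : (u : Y₁ →L[ℂ] Y₁) = R ∘L L := by
    rw [hu, Units.val_oneSub, hCdef, ContinuousLinearMap.one_def]; abel
  set N : Y₁ →L[ℂ] Y₁ := ((u⁻¹ : (Y₁ →L[ℂ] Y₁)ˣ) : Y₁ →L[ℂ] Y₁) with hN
  have hNRL : N ∘L (R ∘L L) = ContinuousLinearMap.id ℂ Y₁ := by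
    rw [← huval]; exact u.inv_mul
  have hRLN : (R ∘L L) ∘L N = ContinuousLinearMap.id ℂ Y₁ := by
    rw [← huval]; exact u.mul_inv
  have hD : N - ContinuousLinearMap.id ℂ Y₁ = -(N ∘L C) := by
    have h2 : N ∘L (ContinuousLinearMap.id ℂ Y₁ + C) = ContinuousLinearMap.id ℂ Y₁ := by
      rw [show ContinuousLinearMap.id ℂ Y₁ + C = R ∘L L by rw [hCdef]; abel]; exact hNRL
    rw [ContinuousLinearMap.comp_add, ContinuousLinearMap.comp_id] at h2
    rw [← h2]; abel
  have hDnorm : ‖N - ContinuousLinearMap.id ℂ Y₁‖ ≤ ‖N‖ * ε := by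
    rw [hD, norm_neg]
    exact le_trans (ContinuousLinearMap.opNorm_comp_le _ _) (by gcongr)
  have hNnorm : ‖N‖ ≤ 2 := by
    have h3 : ‖N‖ ≤ 1 + ‖N‖ * ε := by
      calc ‖N‖ = ‖ContinuousLinearMap.id ℂ Y₁ + (N - ContinuousLinearMap.id ℂ Y₁)‖ := by
            congr 1; abel
        _ ≤ ‖ContinuousLinearMap.id ℂ Y₁‖ + ‖N - ContinuousLinearMap.id ℂ Y₁‖ := norm_add_le _ _
        _ ≤ 1 + ‖N‖ * ε := add_le_add ContinuousLinearMap.norm_id_le hDnorm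
    exact stmt5_arithN _ _ h3 (norm_nonneg N) hεhalf hε
  have hDn2 : ‖N - ContinuousLinearMap.id ℂ Y₁‖ ≤ 2 * ε := by
    refine hDnorm.trans ?_; gcongr
  -- compactness of D = N - id
  have hDc : IsCompactOperator (N - ContinuousLinearMap.id ℂ Y₁) := by
    rw [hD]
    have h4 : IsCompactOperator (N ∘L C) := by
      have := hCc.clm_comp (σ₂₃ := RingHom.id ℂ) N
      rwa [show ⇑N ∘ ⇑C = ⇑(N ∘L C) from rfl] at this
    rw [show (⇑(-(N ∘L C)) : Y₁ → Y₁) = -⇑(N ∘L C) from rfl]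
    exact h4.neg
  -- the idempotent P
  set P : Y₂ →L[ℂ] Y₂ := L ∘L N ∘L R with hPdef
  have hPapp : ∀ y, P y = L (N (R y)) := fun y => rfl
  have hPL' : P ∘L L = L := by
    have : P ∘L L = L ∘L (N ∘L (R ∘L L)) := by ext y; simp [hPapp]
    rw [this, hNRL]; ext y; simp
  have hPL'y : ∀ v, P (L v) = L v := fun v => DFunLike.congr_fun hPL' v
  have hRPy : ∀ y, R (P y) = R y := by
    intro y
    have h5 : R ∘L P = R := by
      rw [hPdef, ← ContinuousLinearMap.comp_assoc, ← ContinuousLinearMap.comp_assoc, hRLN]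
      ext w; simp
    exact DFunLike.congr_fun h5 y
  have hNRLy : ∀ v, N (R (L v)) = v := fun v => DFunLike.congr_fun hNRL v
  have hPidem : ∀ y, P (P y) = P y := by
    intro y; rw [hPapp, hPapp, hNRLy]
  have hLinj : ∀ v : Y₁, L v = 0 → v = 0 := by
    intro v hv
    have h6 := hNRLy v
    rw [hv] at h6
    simp at h6; exact h6.symm
  set Y₃ : Submodule ℂ Y₂ := LinearMap.ker (P : Y₂ →ₗ[ℂ] Y₂) with hY₃
  have hmemY₃ : ∀ y : Y₂, y ∈ Y₃ ↔ P y = 0 := fun y => Iff.rfl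
  have hmem : ∀ y : Y₂, y - P y ∈ Y₃ := by
    intro y; rw [hmemY₃, map_sub, hPidem, sub_self]
  have hNRz : ∀ z : Y₂, z ∈ Y₃ → N (R z) = 0 := by
    intro z hz
    apply hLinj
    have : P z = 0 := hz
    rw [← hPapp]; exact this
  -- the iso S
  set π : Y₂ →L[ℂ] Y₃ := ContinuousLinearMap.codRestrict
      (ContinuousLinearMap.id ℂ Y₂ - P) Y₃ (fun y => by simpa using hmem y) with hπdef
  have hπapp : ∀ y, ((π y : Y₃) : Y₂) = y - P y := fun y => rfl
  set Sf : Y₂ →L[ℂ] Y₁ × Y₃ := (N ∘L R).prod π with hSfdef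
  have hSfapp : ∀ y, Sf y = (N (R y), π y) := fun y => rfl
  set Sb : Y₁ × Y₃ →L[ℂ] Y₂ :=
    L ∘L ContinuousLinearMap.fst ℂ Y₁ Y₃ + Y₃.subtypeL ∘L ContinuousLinearMap.snd ℂ Y₁ Y₃ with hSbdef
  have hSbapp : ∀ (x : Y₁) (z : Y₃), Sb (x, z) = L x + (z : Y₂) := fun x z => rfl
  have hbf : Function.LeftInverse Sb Sf := by
    intro y
    have hy : Sb (Sf y) = L (N (R y)) + (y - P y) := by
      rw [hSfapp, hSbapp, hπapp]
    rw [hy, ← hPapp]; abel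
  have hfb : Function.RightInverse Sb Sf := by
    rintro ⟨x, z, hz⟩
    rw [hSbapp]
    have hNR : N (R (L x + z)) = x := by
      rw [map_add, map_add, hNRz z hz, add_zero, hNRLy]
    have hπv : (L x + z) - P (L x + z) = z := by
      have h3 : P z = 0 := hz
      rw [map_add, hPL'y, h3]; abel
    have hπz : π (L x + z) = ⟨z, hz⟩ := Subtype.ext (by rw [hπapp]; exact hπv)
    rw [hSfapp, hNR, hπz]
  set S : Y₂ ≃L[ℂ] Y₁ × Y₃ := ContinuousLinearEquiv.equivOfInverse Sf Sb hbf hfb with hSdef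
  have hScoe : (S : Y₂ →L[ℂ] Y₁ × Y₃) = Sf := rfl
  have hSsymm : (S.symm : Y₁ × Y₃ →L[ℂ] Y₂) = Sb := rfl
  clear_value S
  clear_value π Sf Sb
  clear_value C u N P
  -- norm bounds
  have hPnorm : ‖P‖ ≤ 2 * β ^ 2 := by
    rw [hPdef]
    calc ‖L ∘L N ∘L R‖ ≤ ‖L‖ * ‖N ∘L R‖ := ContinuousLinearMap.opNorm_comp_le _ _
      _ ≤ ‖L‖ * (‖N‖ * ‖R‖) := by gcongr; exact ContinuousLinearMap.opNorm_comp_le _ _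
      _ ≤ β * (2 * β) := by gcongr
      _ = 2 * β ^ 2 := by ring
  have hNRnorm : ‖N ∘L R‖ ≤ 2 * β := by
    calc ‖N ∘L R‖ ≤ ‖N‖ * ‖R‖ := ContinuousLinearMap.opNorm_comp_le _ _
      _ ≤ 2 * β := by gcongr
  have hπnorm : ‖π‖ ≤ 1 + 2 * β ^ 2 := by
    apply ContinuousLinearMap.opNorm_le_bound _ (by positivity)
    intro y
    have h7 : ‖π y‖ = ‖y - P y‖ := by rw [← Submodule.norm_coe, hπapp]
    rw [h7]
    calc ‖y - P y‖ ≤ ‖y‖ + ‖P y‖ := norm_sub_le _ _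
      _ ≤ ‖y‖ + (2 * β ^ 2) * ‖y‖ := by
          gcongr
          exact (ContinuousLinearMap.le_opNorm _ _).trans (by gcongr)
      _ = (1 + 2 * β ^ 2) * ‖y‖ := by ring
  have hNR3 : ‖N ∘L R‖ ≤ 3 * β ^ 2 := hNRnorm.trans (stmt5_arith1 β hβ)
  have hπ3 : ‖π‖ ≤ 3 * β ^ 2 := hπnorm.trans (stmt5_arith2 β hβ)
  have hSfnorm : ‖Sf‖ ≤ 3 * β ^ 2 := by
    rw [hSfdef]
    simp only [ContinuousLinearMap.opNorm_prod, Prod.norm_def]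
    exact max_le hNR3 hπ3
  have hSbnorm : ‖Sb‖ ≤ 2 * β := by
    apply ContinuousLinearMap.opNorm_le_bound _ (by positivity)
    rintro ⟨x, z⟩
    rw [hSbapp]
    have hx : ‖x‖ ≤ ‖((x, z) : Y₁ × Y₃)‖ := by
      rw [Prod.norm_def]; exact le_max_left _ _
    have hzz : ‖(z : Y₂)‖ ≤ ‖((x, z) : Y₁ × Y₃)‖ := by
      rw [Submodule.norm_coe, Prod.norm_def]; exact le_max_right _ _
    calc ‖L x + (z : Y₂)‖ ≤ ‖L x‖ + ‖(z : Y₂)‖ := norm_add_le _ _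
      _ ≤ β * ‖x‖ + ‖(z : Y₂)‖ := by
          gcongr; exact (ContinuousLinearMap.le_opNorm _ _).trans (by gcongr)
      _ ≤ β * ‖((x, z) : Y₁ × Y₃)‖ + ‖((x, z) : Y₁ × Y₃)‖ := by gcongr
      _ ≤ β * ‖((x, z) : Y₁ × Y₃)‖ + β * ‖((x, z) : Y₁ × Y₃)‖ :=
          add_le_add_right (le_mul_of_one_le_left (norm_nonneg _) hβ) _
      _ = 2 * β * ‖((x, z) : Y₁ × Y₃)‖ := by ring
  refine ⟨Y₃, S, ?_, ?_⟩
  · rw [hScoe, hSsymm]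
    calc ‖Sf‖ * ‖Sb‖ ≤ (3 * β ^ 2) * (2 * β) :=
          mul_le_mul hSfnorm hSbnorm (ContinuousLinearMap.opNorm_nonneg _) (by positivity)
      _ ≤ 7 * β ^ 6 := stmt5_arith3 β hβ
  -- main part
  intro T₁ T₂ hAc hBc
  set A : Y₁ →L[ℂ] Y₂ := L ∘L T₁ - T₂ ∘L L with hAdef
  set B : Y₂ →L[ℂ] Y₁ := T₁ ∘L R - R ∘L T₂ with hBdef
  set D : Y₁ →L[ℂ] Y₁ := N - ContinuousLinearMap.id ℂ Y₁ with hDdef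
  set T₂' : Y₂ →L[ℂ] Y₂ :=
    L ∘L T₁ ∘L N ∘L R +
      (ContinuousLinearMap.id ℂ Y₂ - P) ∘L T₂ ∘L (ContinuousLinearMap.id ℂ Y₂ - P) with hT₂'def
  set K : Y₂ →L[ℂ] Y₂ := T₂' - T₂ with hKdef
  set W₁ : Y₂ →L[ℂ] Y₁ := B + T₁ ∘L (D ∘L R) - D ∘L (R ∘L T₂) with hW₁def
  set W₂ : Y₂ →L[ℂ] Y₂ :=
    A ∘L R - L ∘L B + L ∘L (D ∘L (R ∘L T₂)) - (T₂ ∘L L) ∘L (D ∘L R) with hW₂def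
  have key : K = L ∘L W₁ + W₂ ∘L P := by
    rw [hKdef, hT₂'def, hW₁def, hW₂def, hAdef, hBdef, hDdef, hPdef]
    ext y
    simp only [ContinuousLinearMap.add_apply, ContinuousLinearMap.sub_apply,
      ContinuousLinearMap.comp_apply, ContinuousLinearMap.id_apply, map_sub, map_add, hNRLy]
    abel
  -- compactness of K
  have hW₁c : IsCompactOperator W₁ := by
    rw [hW₁def]
    have c1 : IsCompactOperator (T₁ ∘L (D ∘L R)) := by
      have := (hDc.comp_clm (σ₁₂ := RingHom.id ℂ) R).clm_comp (σ₂₃ := RingHom.id ℂ) T₁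
      rwa [show ⇑T₁ ∘ (⇑D ∘ ⇑R) = ⇑(T₁ ∘L (D ∘L R)) from rfl] at this
    have c2 : IsCompactOperator (D ∘L (R ∘L T₂)) := by
      have := hDc.comp_clm (σ₁₂ := RingHom.id ℂ) (R ∘L T₂)
      rwa [show ⇑D ∘ ⇑(R ∘L T₂) = ⇑(D ∘L (R ∘L T₂)) from rfl] at this
    have c3 := (hBc.add c1).sub c2
    rwa [show (⇑B + ⇑(T₁ ∘L (D ∘L R)) - ⇑(D ∘L (R ∘L T₂)) : Y₂ → Y₁)
      = ⇑(B + T₁ ∘L (D ∘L R) - D ∘L (R ∘L T₂)) from rfl] at c3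
  have hW₂c : IsCompactOperator W₂ := by
    rw [hW₂def]
    have c1 : IsCompactOperator (A ∘L R) := by
      have := hAc.comp_clm (σ₁₂ := RingHom.id ℂ) R
      rwa [show ⇑A ∘ ⇑R = ⇑(A ∘L R) from rfl] at this
    have c2 : IsCompactOperator (L ∘L B) := by
      have := hBc.clm_comp (σ₂₃ := RingHom.id ℂ) L
      rwa [show ⇑L ∘ ⇑B = ⇑(L ∘L B) from rfl] at this
    have c3 : IsCompactOperator (L ∘L (D ∘L (R ∘L T₂))) := by
      have := (hDc.comp_clm (σ₁₂ := RingHom.id ℂ) (R ∘L T₂)).clm_comp (σ₂₃ := RingHom.id ℂ) L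
      rwa [show ⇑L ∘ (⇑D ∘ ⇑(R ∘L T₂)) = ⇑(L ∘L (D ∘L (R ∘L T₂))) from rfl] at this
    have c4 : IsCompactOperator ((T₂ ∘L L) ∘L (D ∘L R)) := by
      have := (hDc.comp_clm (σ₁₂ := RingHom.id ℂ) R).clm_comp (σ₂₃ := RingHom.id ℂ) (T₂ ∘L L)
      rwa [show ⇑(T₂ ∘L L) ∘ (⇑D ∘ ⇑R) = ⇑((T₂ ∘L L) ∘L (D ∘L R)) from rfl] at this
    have c5 := ((c1.sub c2).add c3).sub c4
    rwa [show (⇑(A ∘L R) - ⇑(L ∘L B) + ⇑(L ∘L (D ∘L (R ∘L T₂))) - ⇑((T₂ ∘L L) ∘L (D ∘L R)) : Y₂ → Y₂)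
      = ⇑(A ∘L R - L ∘L B + L ∘L (D ∘L (R ∘L T₂)) - (T₂ ∘L L) ∘L (D ∘L R)) from rfl] at c5
  have hKc : IsCompactOperator K := by
    rw [key]
    have c1 : IsCompactOperator (L ∘L W₁) := by
      have := hW₁c.clm_comp (σ₂₃ := RingHom.id ℂ) L
      rwa [show ⇑L ∘ ⇑W₁ = ⇑(L ∘L W₁) from rfl] at this
    have c2 : IsCompactOperator (W₂ ∘L P) := by
      have := hW₂c.comp_clm (σ₁₂ := RingHom.id ℂ) P
      rwa [show ⇑W₂ ∘ ⇑P = ⇑(W₂ ∘L P) from rfl] at this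
    have c3 := c1.add c2
    rwa [show (⇑(L ∘L W₁) + ⇑(W₂ ∘L P) : Y₂ → Y₂) = ⇑(L ∘L W₁ + W₂ ∘L P) from rfl] at c3
  -- T₃
  have hT₃mem : ∀ z : Y₃, ((ContinuousLinearMap.id ℂ Y₂ - P) ∘L T₂ ∘L Y₃.subtypeL) z ∈ Y₃ := by
    intro z
    rw [hmemY₃]
    simp only [ContinuousLinearMap.comp_apply, ContinuousLinearMap.sub_apply,
      ContinuousLinearMap.id_apply, Submodule.subtypeL_apply]
    rw [map_sub, hPidem, sub_self]
  set T₃ : Y₃ →L[ℂ] Y₃ := ContinuousLinearMap.codRestrict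
      ((ContinuousLinearMap.id ℂ Y₂ - P) ∘L T₂ ∘L Y₃.subtypeL) Y₃ hT₃mem with hT₃def
  have hT₃app : ∀ z : Y₃, ((T₃ z : Y₃) : Y₂) = T₂ (z : Y₂) - P (T₂ (z : Y₂)) := fun z => rfl
  refine ⟨K, T₃, hKc, ?_, ?_⟩
  · -- the conjugation identity
    have hTK : T₂ + K = T₂' := by rw [hKdef]; abel
    rw [hScoe, hSsymm, hTK]
    apply ContinuousLinearMap.ext
    rintro ⟨x, z, hz⟩
    have hb : Sb (x, ⟨z, hz⟩) = L x + z := hSbapp x ⟨z, hz⟩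
    have hmid : T₂' (L x + z) = L (T₁ x) + (T₂ z - P (T₂ z)) := by
      rw [hT₂'def]
      simp only [ContinuousLinearMap.add_apply, ContinuousLinearMap.comp_apply,
        ContinuousLinearMap.sub_apply, ContinuousLinearMap.id_apply]
      have e1 : N (R (L x + z)) = x := by
        rw [map_add, map_add, hNRz z hz, add_zero, hNRLy]
      have e2 : (L x + z) - P (L x + z) = z := by
        have h3 : P z = 0 := hz
        rw [map_add, hPL'y, h3]; abel
      rw [e1, e2]
    have hfin : Sf (L (T₁ x) + (T₂ z - P (T₂ z))) = (T₁ x, T₃ ⟨z, hz⟩) := by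
      have hker : (T₂ z - P (T₂ z)) ∈ Y₃ := by
        rw [hmemY₃, map_sub, hPidem, sub_self]
      have e1 : N (R (L (T₁ x) + (T₂ z - P (T₂ z)))) = T₁ x := by
        rw [map_add, map_add, hNRz _ hker, add_zero, hNRLy]
      have e2 : π (L (T₁ x) + (T₂ z - P (T₂ z))) = T₃ ⟨z, hz⟩ := by
        apply Subtype.ext
        rw [hπapp, hT₃app]
        have h8 : P (L (T₁ x) + (T₂ z - P (T₂ z))) = L (T₁ x) := by
          rw [map_add, hPL'y, map_sub, hPidem, sub_self, add_zero]
        rw [h8]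
        abel
      rw [hSfapp, e1, e2]
    show Sf (T₂' (Sb (x, ⟨z, hz⟩))) = (T₁.prodMap T₃) (x, ⟨z, hz⟩)
    rw [hb, hmid, hfin]
    rfl
  · -- the norm bound
    intro hAn hBn
    show ‖K‖ ≤ 100 * β ^ 4 * ε * (‖T₂‖ + 1)
    have hDn : ‖D‖ ≤ 2 * ε := by rw [hDdef]; exact hDn2
    have hT₂n : (0:ℝ) ≤ ‖T₂‖ := norm_nonneg _
    have hβ0' : (0:ℝ) ≤ β := hβ0.le
    have hε1 : ε ≤ 1 := le_of_lt (lt_trans hεhalf (by norm_num))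
    have hT₁n : ‖T₁‖ ≤ 2 * β ^ 2 * (‖T₂‖ + 1) := by
      have hid : T₁ = N ∘L (R ∘L (A + T₂ ∘L L)) := by
        ext v
        simp only [ContinuousLinearMap.comp_apply, ContinuousLinearMap.add_apply]
        have hv : A v + T₂ (L v) = L (T₁ v) := by
          rw [hAdef]
          simp only [ContinuousLinearMap.sub_apply, ContinuousLinearMap.comp_apply]
          abel
        rw [hv, hNRLy]
      have h10 : ‖A + T₂ ∘L L‖ ≤ ε + ‖T₂‖ * β := by
        refine (norm_add_le _ _).trans (add_le_add hAn ?_)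
        exact (ContinuousLinearMap.opNorm_comp_le _ _).trans
          (mul_le_mul_of_nonneg_left hL (ContinuousLinearMap.opNorm_nonneg T₂))
      calc ‖T₁‖ = ‖N ∘L (R ∘L (A + T₂ ∘L L))‖ := by rw [← hid]
        _ ≤ ‖N‖ * ‖R ∘L (A + T₂ ∘L L)‖ := ContinuousLinearMap.opNorm_comp_le _ _
        _ ≤ ‖N‖ * (‖R‖ * ‖A + T₂ ∘L L‖) :=
            mul_le_mul_of_nonneg_left (ContinuousLinearMap.opNorm_comp_le _ _)
              (ContinuousLinearMap.opNorm_nonneg N)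
        _ ≤ 2 * (β * (ε + ‖T₂‖ * β)) := by
            refine mul_le_mul hNnorm ?_ (by positivity) (by norm_num)
            exact mul_le_mul hR h10 (ContinuousLinearMap.opNorm_nonneg _) hβ0'
        _ ≤ 2 * β ^ 2 * (‖T₂‖ + 1) := stmt5_arithT1 β ε ‖T₂‖ hβ hε.le hε1 hT₂n
    have nDR : ‖D ∘L R‖ ≤ 2 * ε * β := by
      refine (ContinuousLinearMap.opNorm_comp_le _ _).trans ?_
      exact mul_le_mul hDn hR (ContinuousLinearMap.opNorm_nonneg R) (by positivity)
    have nRT₂ : ‖R ∘L T₂‖ ≤ β * ‖T₂‖ := by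
      refine (ContinuousLinearMap.opNorm_comp_le _ _).trans ?_
      exact mul_le_mul_of_nonneg_right hR (ContinuousLinearMap.opNorm_nonneg T₂)
    have nDRT₂ : ‖D ∘L (R ∘L T₂)‖ ≤ 2 * ε * (β * ‖T₂‖) := by
      refine (ContinuousLinearMap.opNorm_comp_le _ _).trans ?_
      exact mul_le_mul hDn nRT₂ (ContinuousLinearMap.opNorm_nonneg _) (by positivity)
    have hW₁n : ‖W₁‖ ≤ ε + (2 * β ^ 2 * (‖T₂‖ + 1)) * (2 * ε * β) + 2 * ε * (β * ‖T₂‖) := by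
      rw [hW₁def]
      refine (norm_sub_le _ _).trans ?_
      refine add_le_add (le_trans (norm_add_le _ _) (add_le_add hBn ?_)) nDRT₂
      refine (ContinuousLinearMap.opNorm_comp_le _ _).trans ?_
      exact mul_le_mul hT₁n nDR (ContinuousLinearMap.opNorm_nonneg _) (by positivity)
    have hW₂n : ‖W₂‖ ≤ ε * β + β * ε + β * (2 * ε * (β * ‖T₂‖)) + ‖T₂‖ * β * (2 * ε * β) := by
      rw [hW₂def]
      have n1 : ‖A ∘L R‖ ≤ ε * β := by
        refine (ContinuousLinearMap.opNorm_comp_le _ _).trans ?_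
        exact mul_le_mul hAn hR (ContinuousLinearMap.opNorm_nonneg R) hε.le
      have n2 : ‖L ∘L B‖ ≤ β * ε := by
        refine (ContinuousLinearMap.opNorm_comp_le _ _).trans ?_
        exact mul_le_mul hL hBn (ContinuousLinearMap.opNorm_nonneg B) hβ0'
      have n3 : ‖L ∘L (D ∘L (R ∘L T₂))‖ ≤ β * (2 * ε * (β * ‖T₂‖)) := by
        refine (ContinuousLinearMap.opNorm_comp_le _ _).trans ?_
        exact mul_le_mul hL nDRT₂ (ContinuousLinearMap.opNorm_nonneg _) hβ0'
      have n4 : ‖(T₂ ∘L L) ∘L (D ∘L R)‖ ≤ ‖T₂‖ * β * (2 * ε * β) := by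
        refine (ContinuousLinearMap.opNorm_comp_le _ _).trans ?_
        refine mul_le_mul ?_ nDR (ContinuousLinearMap.opNorm_nonneg _) (by positivity)
        exact (ContinuousLinearMap.opNorm_comp_le _ _).trans
          (mul_le_mul_of_nonneg_left hL (ContinuousLinearMap.opNorm_nonneg T₂))
      calc ‖A ∘L R - L ∘L B + L ∘L (D ∘L (R ∘L T₂)) - (T₂ ∘L L) ∘L (D ∘L R)‖
          ≤ ‖A ∘L R - L ∘L B + L ∘L (D ∘L (R ∘L T₂))‖ + ‖(T₂ ∘L L) ∘L (D ∘L R)‖ :=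
            norm_sub_le _ _
        _ ≤ ‖A ∘L R - L ∘L B‖ + ‖L ∘L (D ∘L (R ∘L T₂))‖ + ‖(T₂ ∘L L) ∘L (D ∘L R)‖ :=
            add_le_add_left (norm_add_le _ _) _
        _ ≤ ‖A ∘L R‖ + ‖L ∘L B‖ + ‖L ∘L (D ∘L (R ∘L T₂))‖ + ‖(T₂ ∘L L) ∘L (D ∘L R)‖ := by
            refine add_le_add_left (add_le_add_left (norm_sub_le _ _) _) _
        _ ≤ ε * β + β * ε + β * (2 * ε * (β * ‖T₂‖)) + ‖T₂‖ * β * (2 * ε * β) :=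
            add_le_add (add_le_add (add_le_add n1 n2) n3) n4
    have hKn : ‖K‖ ≤ ‖L‖ * ‖W₁‖ + ‖W₂‖ * ‖P‖ := by
      rw [key]
      refine (norm_add_le _ _).trans ?_
      exact add_le_add (ContinuousLinearMap.opNorm_comp_le _ _)
        (ContinuousLinearMap.opNorm_comp_le _ _)
    calc ‖K‖ ≤ ‖L‖ * ‖W₁‖ + ‖W₂‖ * ‖P‖ := hKn
      _ ≤ β * (ε + (2 * β ^ 2 * (‖T₂‖ + 1)) * (2 * ε * β) + 2 * ε * (β * ‖T₂‖))
          + (ε * β + β * ε + β * (2 * ε * (β * ‖T₂‖)) + ‖T₂‖ * β * (2 * ε * β)) * (2 * β ^ 2) :=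
          add_le_add
            (mul_le_mul hL hW₁n (ContinuousLinearMap.opNorm_nonneg _) hβ0')
            (mul_le_mul hW₂n hPnorm (ContinuousLinearMap.opNorm_nonneg _) (by positivity))
      _ ≤ 100 * β ^ 4 * ε * (‖T₂‖ + 1) := stmt5_arithK β ε ‖T₂‖ hβ hε.le hε1 hT₂n
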